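/- For every natural number k ≥ 1, ∑_{i=1}^{k} cot^2(iπ/(k+1)) = k(k-1)/3. -/

import Mathlib

open Real Finset


section CotSqHelpers

open Complex

lemma cot_sq_eq' (z : ℂ) (hw : Complex.exp (2 * z * Complex.I) ≠ 1) :
    (Complex.cot z) ^ 2 =
      -1 - 4 * (Complex.exp (2 * z * Complex.I) - 1)⁻¹
        - 4 * ((Complex.exp (2 * z * Complex.I) - 1)⁻¹) ^ 2 := by
  set u : ℂ := Complex.exp (z * Complex.I) with hu
  have hu0 : u ≠ 0 := Complex.exp_ne_zero _
  have hw2 : Complex.exp (2 * z * Complex.I) = u ^ 2 := by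
    rw [hu, ← Complex.exp_nat_mul]; ring_nf
  have hcos : Complex.cos z = (u ^ 2 + 1) / (2 * u) := by
    rw [Complex.cos, hu, neg_mul, Complex.exp_neg]
    field_simp
  have hsin : Complex.sin z = (u ^ 2 - 1) / (2 * u * Complex.I) := by
    rw [Complex.sin, hu, neg_mul, Complex.exp_neg]
    field_simp
    linear_combination (1 - Complex.exp (z * Complex.I) ^ 2) * Complex.I_sq
  have hne : u ^ 2 - 1 ≠ 0 := by
    rw [hw2] at hw; intro h; apply hw; linear_combination h
  have hsne : Complex.sin z ≠ 0 := by
    rw [hsin]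
    exact div_ne_zero hne (by simp [hu0, Complex.I_ne_zero])
  have hcot : Complex.cot z = Complex.I * (u ^ 2 + 1) / (u ^ 2 - 1) := by
    rw [Complex.cot_eq_cos_div_sin]
    rw [div_eq_div_iff hsne hne, hcos, hsin]
    field_simp
  have hcot2 : (Complex.cot z) ^ 2 = -(u^2+1)^2 / (u^2-1)^2 := by
    rw [hcot, div_pow, mul_pow, Complex.I_sq]; ring_nf
  rw [hcot2, hw2]
  field_simp
  ring

lemma key_inv (n : ℕ) (hn : 0 < n) (w : ℂ) (hw1 : w ≠ 1) (hwn : w ^ n = 1) :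
    (w - 1)⁻¹ = (n : ℂ)⁻¹ * ∑ j ∈ range n, ((j:ℂ)+1) * w ^ j := by
  have hgeom : ∑ j ∈ range n, w ^ j = 0 := by
    rw [geom_sum_eq hw1, hwn]; simp
  have h1 : ∑ j ∈ range n, ((j:ℂ)+1) * w ^ (j+1)
      = (∑ j ∈ range n, (j:ℂ) * w ^ j) + n := by
    have h2 := Finset.sum_range_succ' (fun j => (j:ℂ) * w ^ j) n
    have h3 := Finset.sum_range_succ (fun j => (j:ℂ) * w ^ j) n
    rw [hwn] at h3
    push_cast at h2 h3 ⊢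
    rw [h3] at h2
    linear_combination -h2
  have d1 : ∑ j ∈ range n, ((j:ℂ)+1) * w ^ (j+1)
      = w * ∑ j ∈ range n, ((j:ℂ)+1) * w ^ j := by
    rw [Finset.mul_sum]; exact Finset.sum_congr rfl fun j _ => by ring
  have d2 : ∑ j ∈ range n, (j:ℂ) * w ^ j
      = (∑ j ∈ range n, ((j:ℂ)+1) * w ^ j) - ∑ j ∈ range n, w ^ j := by
    rw [← Finset.sum_sub_distrib]; exact Finset.sum_congr rfl fun j _ => by ring
  have hmul : (w - 1) * ∑ j ∈ range n, ((j:ℂ)+1) * w ^ j = n := by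
    linear_combination h1 - d1 + d2 - hgeom
  have hne : w - 1 ≠ 0 := sub_ne_zero.mpr hw1
  have hnn : (n : ℂ) ≠ 0 := Nat.cast_ne_zero.mpr hn.ne'
  field_simp
  linear_combination -hmul

lemma orth (n : ℕ) (hn : n ≠ 0) (m : ℕ) :
    ∑ i ∈ range n, (Complex.exp (2 * Real.pi * Complex.I / n) ^ m) ^ i
      = if n ∣ m then (n : ℂ) else 0 := by
  have hprim := Complex.isPrimitiveRoot_exp n hn
  by_cases h : n ∣ m
  · rw [if_pos h]
    obtain ⟨c, rfl⟩ := h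
    rw [pow_mul, hprim.pow_eq_one, one_pow]
    simp
  · rw [if_neg h]
    have h1 : Complex.exp (2 * Real.pi * Complex.I / n) ^ m ≠ 1 := by
      intro hh
      exact h ((hprim.pow_eq_one_iff_dvd m).mp hh)
    rw [geom_sum_eq h1, ← pow_mul, mul_comm m n, pow_mul, hprim.pow_eq_one, one_pow]
    simp

lemma closedL (k : ℕ) (C : ℂ) :
    ∑ j ∈ range k, ((j:ℂ)+2) * (C - (j:ℂ) + 1)
      = (C+1) * ((k:ℂ)*((k:ℂ)-1)/2 + 2*(k:ℂ))
        - ((k:ℂ)*((k:ℂ)-1)*(2*(k:ℂ)-1)/6 + (k:ℂ)*((k:ℂ)-1)) := by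
  induction k with
  | zero => simp
  | succ k ih =>
    rw [Finset.sum_range_succ, ih]
    push_cast
    ring

lemma closedC1 (n : ℕ) :
    ∑ j ∈ range n, ((j:ℂ)+1) = (n:ℂ)*((n:ℂ)+1)/2 := by
  induction n with
  | zero => simp
  | succ n ih => rw [Finset.sum_range_succ, ih]; push_cast; ring

end CotSqHelpers

theorem sum_cot_sq (k : ℕ) (hk : 1 ≤ k) :
    ∑ i ∈ Finset.Icc 1 k, (Real.cot (i * Real.pi / (k + 1))) ^ 2 =
      (k : ℝ) * ((k : ℝ) - 1) / 3 := by
  set n : ℕ := k + 1 with hn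
  have hn0 : n ≠ 0 := by omega
  have hnc : (n : ℂ) ≠ 0 := Nat.cast_ne_zero.mpr hn0
  set ζ : ℂ := Complex.exp (2 * Real.pi * Complex.I / n) with hζ
  have hprim : IsPrimitiveRoot ζ n := Complex.isPrimitiveRoot_exp n hn0
  set s : ℕ → ℂ := fun i => ∑ j ∈ range n, ((j:ℂ)+1) * (ζ ^ i) ^ j with hs
  have hne1 : ∀ i ∈ Icc 1 k, ζ ^ i ≠ 1 := by
    intro i hi h1
    simp only [mem_Icc] at hi
    have := (hprim.pow_eq_one_iff_dvd i).mp h1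
    have := Nat.le_of_dvd (by omega) this
    omega
  have hs0 : s 0 = (n:ℂ) * ((n:ℂ)+1)/2 := by
    simp only [hs, pow_zero, one_pow, mul_one]
    exact closedC1 n
  have hsplit : ∀ g : ℕ → ℂ, ∑ i ∈ range n, g i = g 0 + ∑ i ∈ Icc 1 k, g i := by
    intro g
    have : range n = insert 0 (Icc 1 k) := by
      ext x; simp only [mem_range, mem_insert, mem_Icc]; omega
    rw [this, Finset.sum_insert (by simp)]
  have hA1 : ∑ i ∈ range n, s i = (n : ℂ) := by
    simp only [hs]
    rw [Finset.sum_comm]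
    have : ∀ j ∈ range n, ∑ i ∈ range n, ((j:ℂ)+1) * (ζ ^ i) ^ j
        = ((j:ℂ)+1) * (if n ∣ j then (n:ℂ) else 0) := by
      intro j hj
      rw [← Finset.mul_sum]
      congr 1
      rw [← orth n hn0 j]
      exact Finset.sum_congr rfl fun i _ => by
        rw [← pow_mul, ← pow_mul, mul_comm]
    rw [Finset.sum_congr rfl this]
    rw [Finset.sum_eq_single_of_mem 0 (by simp [hn]) ?_]
    · simp
    · intro j hj hj0
      rw [if_neg ?_, mul_zero]
      simp only [mem_range] at hj
      intro hdvd
      have := Nat.le_of_dvd (by omega) hdvd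
      omega
  have hA2 : ∑ i ∈ range n, (s i) ^ 2
      = (∑ j ∈ range k, ((j:ℂ)+2) * ((k:ℂ) - (j:ℂ) + 1)) * n + n := by
    have hsq : ∀ i, (s i) ^ 2
        = ∑ j ∈ range n, ∑ l ∈ range n, ((j:ℂ)+1)*((l:ℂ)+1) * (ζ^(j+l))^i := by
      intro i
      rw [sq]
      simp only [hs]
      rw [Finset.sum_mul_sum]
      refine Finset.sum_congr rfl fun j _ => Finset.sum_congr rfl fun l _ => ?_
      have h : (ζ ^ (j+l))^i = (ζ^i)^j * (ζ^i)^l := by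
        rw [← pow_add, ← pow_mul, mul_comm, pow_mul]
      rw [h]; ring
    rw [Finset.sum_congr rfl (fun i _ => hsq i), Finset.sum_comm]
    have step : ∀ j ∈ range n,
        (∑ i ∈ range n, ∑ l ∈ range n, ((j:ℂ)+1)*((l:ℂ)+1) * (ζ^(j+l))^i)
          = ∑ l ∈ range n, ((j:ℂ)+1)*((l:ℂ)+1) * (if n ∣ (j+l) then (n:ℂ) else 0) := by
      intro j _
      rw [Finset.sum_comm]
      refine Finset.sum_congr rfl fun l _ => ?_
      rw [← Finset.mul_sum, hζ, orth n hn0 (j+l)]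
    rw [Finset.sum_congr rfl step]
    simp only [hn]
    have peel := Finset.sum_range_succ'
      (fun j => ∑ l ∈ range (k+1), ((j:ℂ)+1)*((l:ℂ)+1)
        * (if (k+1) ∣ (j+l) then ((k+1 : ℕ):ℂ) else 0)) k
    rw [peel]
    have hF0 : ∑ l ∈ range (k+1), (((0:ℕ):ℂ)+1)*((l:ℂ)+1)
        * (if (k+1) ∣ (0+l) then ((k+1 : ℕ):ℂ) else 0) = ((k+1 : ℕ):ℂ) := by
      rw [Finset.sum_eq_single_of_mem 0 (Finset.mem_range.mpr (by omega))]
      · norm_num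
      · intro l hl hl0
        rw [if_neg, mul_zero]
        simp only [mem_range] at hl
        intro hd
        have := Nat.le_of_dvd (by omega) hd
        omega
    have hFj : ∀ j ∈ range k, ∑ l ∈ range (k+1), ((((j+1:ℕ)):ℂ)+1)*((l:ℂ)+1)
        * (if (k+1) ∣ ((j+1)+l) then ((k+1 : ℕ):ℂ) else 0)
          = ((j:ℂ)+2) * ((k:ℂ) - (j:ℂ) + 1) * ((k+1 : ℕ):ℂ) := by
      intro j hj
      simp only [mem_range] at hj
      rw [Finset.sum_eq_single_of_mem (k-j) (Finset.mem_range.mpr (by omega))]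
      · rw [if_pos (by exact ⟨1, by omega⟩)]
        have : ((k - j : ℕ) : ℂ) = (k:ℂ) - (j:ℂ) := by
          push_cast [Nat.cast_sub hj.le]; ring
        rw [this]
        push_cast
        ring
      · intro l hl hlne
        rw [if_neg, mul_zero]
        simp only [mem_range] at hl
        intro hd
        have hle : k+1 ≤ j+1+l := Nat.le_of_dvd (by omega) hd
        have h2 : (k+1) ∣ (j+1+l - (k+1)) := Nat.dvd_sub hd dvd_rfl
        have h3 : j+1+l - (k+1) = 0 := Nat.eq_zero_of_dvd_of_lt h2 (by omega)
        omega
    rw [Finset.sum_congr rfl hFj, hF0, Finset.sum_mul]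
  have hpt : ∀ i ∈ Icc 1 k,
      (Complex.cot ((i:ℂ) * (Real.pi:ℂ) / ((k:ℂ) + 1))) ^ 2
        = -1 - 4 * ((n:ℂ)⁻¹ * s i) - 4 * ((n:ℂ)⁻¹ * s i) ^ 2 := by
    intro i hi
    have hexp : Complex.exp (2 * ((i:ℂ) * (Real.pi:ℂ) / ((k:ℂ) + 1)) * Complex.I)
        = ζ ^ i := by
      rw [hζ, ← Complex.exp_nat_mul]
      congr 1
      have : ((k:ℂ) + 1) ≠ 0 := by
        have : ((n:ℂ)) = (k:ℂ) + 1 := by push_cast [hn]; ring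
        rw [← this]; exact hnc
      push_cast [hn]
      field_simp
    have h1 := cot_sq_eq' ((i:ℂ) * (Real.pi:ℂ) / ((k:ℂ) + 1)) (by rw [hexp]; exact hne1 i hi)
    rw [hexp] at h1
    rw [h1, key_inv n (by omega) (ζ ^ i) (hne1 i hi)
      (by rw [← pow_mul, mul_comm, pow_mul, hprim.pow_eq_one, one_pow])]
  rw [← Complex.ofReal_inj]
  push_cast
  rw [Finset.sum_congr rfl hpt]
  have hS1 : ∑ i ∈ Icc 1 k, s i = (n:ℂ) - (n:ℂ) * ((n:ℂ)+1)/2 := by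
    have := hsplit s
    rw [hA1, hs0] at this
    linear_combination -this
  have hS2 : ∑ i ∈ Icc 1 k, (s i) ^ 2
      = (∑ j ∈ range k, ((j:ℂ)+2) * ((k:ℂ) - (j:ℂ) + 1)) * n + n
        - ((n:ℂ) * ((n:ℂ)+1)/2) ^ 2 := by
    have := hsplit (fun i => (s i) ^ 2)
    rw [hA2] at this
    rw [hs0] at this
    linear_combination -this
  have expand : ∑ i ∈ Icc 1 k, (-1 - 4 * ((n:ℂ)⁻¹ * s i) - 4 * ((n:ℂ)⁻¹ * s i) ^ 2)
      = -(k:ℂ) - 4 * (n:ℂ)⁻¹ * (∑ i ∈ Icc 1 k, s i)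
        - 4 * ((n:ℂ)⁻¹)^2 * (∑ i ∈ Icc 1 k, (s i) ^ 2) := by
    rw [Finset.sum_sub_distrib, Finset.sum_sub_distrib]
    rw [← Finset.mul_sum]
    simp only [mul_pow, ← Finset.mul_sum]
    rw [Finset.sum_const, Nat.card_Icc]
    push_cast
    ring
  rw [expand, hS1, hS2, closedL k (k:ℂ)]
  have hkn : (n:ℂ) = (k:ℂ) + 1 := by push_cast [hn]; ring
  rw [hkn]
  have hk1 : ((k:ℂ) + 1) ≠ 0 := by rw [← hkn]; exact hnc
  field_simp
  ring
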